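/- Let p(s,X) = X² + 1 and α(t) = e^{−t}, and suppose (n,N,X) solves the DDM system with mass conservation so that N(t) = X(t)² + 1 and X(t) = ∫₀^t e^{−(t−s)}(X(s)²+1) ds. Then X satisfies X'(t) = X(t)² − X(t) + 1 with X(0) = 0, and X blows up in finite time; in particular the continuous solution of the DDM equation cannot be extended to all t > 0. -/

import Mathlib

open MeasureTheory Set

theorem ddm_blowup_example :
    (∀ (X : ℝ → ℝ) (T : ℝ), 0 < T → ContinuousOn X (Icc 0 T) →
      (∀ t ∈ Icc (0:ℝ) T,
        X t = ∫ τ in (0:ℝ)..t, Real.exp (-(t - τ)) * ((X τ) ^ 2 + 1)) →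
      X 0 = 0 ∧ ∀ t ∈ Ioo (0:ℝ) T, HasDerivAt X ((X t) ^ 2 - X t + 1) t) ∧
    ¬∃ X : ℝ → ℝ, ContinuousOn X (Ici 0) ∧
      ∀ t ∈ Ici (0:ℝ),
        X t = ∫ τ in (0:ℝ)..t, Real.exp (-(t - τ)) * ((X τ) ^ 2 + 1) := by
  have key : ∀ (X : ℝ → ℝ) (T : ℝ), 0 < T → ContinuousOn X (Icc 0 T) →
      (∀ t ∈ Icc (0:ℝ) T,
        X t = ∫ τ in (0:ℝ)..t, Real.exp (-(t - τ)) * ((X τ) ^ 2 + 1)) →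
      X 0 = 0 ∧ ∀ t ∈ Ioo (0:ℝ) T, HasDerivAt X ((X t) ^ 2 - X t + 1) t := by
    intro X T hT hXc hXeq
    have hX0 : X 0 = 0 := by
      have := hXeq 0 ⟨le_refl 0, hT.le⟩
      simpa using this
    refine ⟨hX0, ?_⟩
    -- rewrite the equation
    set g : ℝ → ℝ := fun τ => Real.exp τ * ((X τ) ^ 2 + 1) with hg
    set F : ℝ → ℝ := fun u => ∫ τ in (0:ℝ)..u, g τ with hF
    have hgc : ContinuousOn g (Icc 0 T) := by
      exact (Real.continuous_exp.continuousOn).mul (((hXc.pow 2).add continuousOn_const))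
    have hXeq' : ∀ u ∈ Icc (0:ℝ) T, X u = Real.exp (-u) * F u := by
      intro u hu
      rw [hXeq u hu, hF]
      rw [← intervalIntegral.integral_const_mul]
      apply intervalIntegral.integral_congr
      intro τ _
      simp only [hg]
      rw [← mul_assoc, ← Real.exp_add]
      ring_nf
    intro t ht
    have htIcc : Icc (0:ℝ) T ∈ nhds t := Icc_mem_nhds ht.1 ht.2
    have hgint : IntervalIntegrable g volume 0 t := by
      apply ContinuousOn.intervalIntegrable
      apply hgc.mono
      rw [uIcc_of_le ht.1.le]
      exact Icc_subset_Icc le_rfl ht.2.le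
    have hmeas : StronglyMeasurableAtFilter g (nhds t) volume :=
      ⟨Icc 0 T, htIcc, hgc.aestronglyMeasurable measurableSet_Icc⟩
    have hgcont : ContinuousAt g t := hgc.continuousAt htIcc
    have hFd : HasDerivAt F (g t) t :=
      intervalIntegral.integral_hasDerivAt_right hgint hmeas hgcont
    have hEd : HasDerivAt (fun u => Real.exp (-u)) (-Real.exp (-t)) t := by
      have := (Real.hasDerivAt_exp (-t)).comp t ((hasDerivAt_id t).neg)
      simp at this; exact this
    have hh : HasDerivAt (fun u => Real.exp (-u) * F u)
        ((-Real.exp (-t)) * F t + Real.exp (-t) * g t) t := hEd.mul hFd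
    have hXt : X t = Real.exp (-t) * F t := hXeq' t ⟨ht.1.le, ht.2.le⟩
    have h1 : Real.exp (-t) * Real.exp t = 1 := by
      rw [← Real.exp_add]; simp
    have hval : (-Real.exp (-t)) * F t + Real.exp (-t) * g t
        = (X t) ^ 2 - X t + 1 := by
      simp only [hg]
      nlinarith [hXt, h1]
    rw [hval] at hh
    apply hh.congr_of_eventuallyEq
    filter_upwards [htIcc] with u hu
    exact hXeq' u hu
  refine ⟨key, ?_⟩
  rintro ⟨X, hXc, hXeq⟩
  -- global ODE facts
  have hX0 : X 0 = 0 := by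
    have := hXeq 0 self_mem_Ici
    simpa using this
  have hder : ∀ t : ℝ, 0 < t → HasDerivAt X ((X t) ^ 2 - X t + 1) t := by
    intro t ht
    have h := key X (t + 1) (by linarith) (hXc.mono (Icc_subset_Ici_self))
      (fun u hu => hXeq u hu.1)
    exact h.2 t ⟨ht, by linarith⟩
  -- Y t = X t - (3/4) t is monotone on Ici 0
  have hYmono : MonotoneOn (fun t => X t - (3/4) * t) (Ici 0) := by
    apply monotoneOn_of_deriv_nonneg (convex_Ici 0)
      (hXc.sub (continuousOn_const.mul continuousOn_id))
    · intro t ht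
      rw [interior_Ici] at ht
      exact ((hder t ht).sub ((hasDerivAt_id t).const_mul (3/4))).differentiableAt.differentiableWithinAt
    · intro t ht
      rw [interior_Ici] at ht
      have hd := (hder t ht).sub ((hasDerivAt_id t).const_mul (3/4))
      rw [show deriv (X - (fun x => (3:ℝ)/4) * id) t = _ from hd.deriv]
      nlinarith [sq_nonneg (X t - 1/2)]
  have hXlb : ∀ t : ℝ, 0 ≤ t → (3/4) * t ≤ X t := by
    intro t ht
    have := hYmono (self_mem_Ici) (mem_Ici.mpr ht) ht
    simp only [hX0] at this
    linarith
  -- on [2, ∞), X ≥ 3/2 ≥ 1 > 0 ; Z t = (X t)⁻¹ + t/2 is antitone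
  have hXpos : ∀ t : ℝ, 2 ≤ t → 1 ≤ X t := by
    intro t ht
    have := hXlb t (by linarith)
    linarith
  have hZanti : AntitoneOn (fun t => (X t)⁻¹ + t / 2) (Ici 2) := by
    have hZd : ∀ t : ℝ, 2 < t → HasDerivAt (fun u => (X u)⁻¹ + u / 2)
        (-(X t ^ 2 - X t + 1) / X t ^ 2 + 1 / 2) t := by
      intro t ht
      have h1 : (1:ℝ) ≤ X t := hXpos t ht.le
      have hne : X t ≠ 0 := by intro h; rw [h] at h1; linarith
      have ha := (hder t (by linarith : (0:ℝ) < t)).inv hne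
      have hb : HasDerivAt (fun u : ℝ => u / 2) (1 / 2) t := by
        simpa using (hasDerivAt_id t).div_const 2
      exact ha.add hb
    apply antitoneOn_of_deriv_nonpos (convex_Ici 2)
    · apply ContinuousOn.add _ (continuousOn_id.div_const 2)
      apply ContinuousOn.inv₀ (hXc.mono (t := Ici 2) (fun x hx => le_trans (by norm_num) hx))
      intro t ht
      exact fun h => by have := hXpos t ht; rw [h] at this; linarith
    · intro t ht
      rw [interior_Ici] at ht
      exact (hZd t ht).differentiableAt.differentiableWithinAt
    · intro t ht
      rw [interior_Ici] at ht
      have h1 : (1:ℝ) ≤ X t := hXpos t ht.le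
      rw [(hZd t ht).deriv]
      have hX2 : (0:ℝ) < X t ^ 2 := by positivity
      have key2 : 1 / 2 ≤ (X t ^ 2 - X t + 1) / X t ^ 2 := by
        rw [le_div_iff₀ hX2]
        nlinarith [sq_nonneg (X t - 1)]
      rw [neg_div]
      linarith
  -- contradiction at t = 4
  have h2 : (2:ℝ) ∈ Ici (2:ℝ) := self_mem_Ici
  have h4 : (4:ℝ) ∈ Ici (2:ℝ) := by norm_num
  have := hZanti h2 h4 (by norm_num)
  have hX2 : (1:ℝ) ≤ X 2 := hXpos 2 le_rfl
  have hX4 : (1:ℝ) ≤ X 4 := hXpos 4 (by norm_num)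
  have i2 : (X 2)⁻¹ ≤ 1 := inv_le_one_of_one_le₀ hX2
  have i4 : 0 < (X 4)⁻¹ := inv_pos.mpr (by linarith)
  simp only at this
  linarith
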